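/- Let α_n(a,b) = Σ 2^{dd(π)} over permutations of [n] with no double ascents whose descent word starts with an ascent and ends with a descent. Then for n ≥ 3, α_n(a,b) equals the nearest integer to (1 − 2/e) · n!. -/

import Mathlib

open Finset
open scoped Classical

/-- π has an ascent at position i (0-indexed): π_i < π_{i+1}. -/
def Asc {n : ℕ} (π : Equiv.Perm (Fin n)) (i : ℕ) : Prop :=
  ∃ h : i + 1 < n, π ⟨i, Nat.lt_of_succ_lt h⟩ < π ⟨i + 1, h⟩

/-- π has a descent at position i (0-indexed): π_i > π_{i+1}. -/
def Desc {n : ℕ} (π : Equiv.Perm (Fin n)) (i : ℕ) : Prop :=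
  ∃ h : i + 1 < n, π ⟨i + 1, h⟩ < π ⟨i, Nat.lt_of_succ_lt h⟩

/-- The number of double descents of π: positions i with π_i > π_{i+1} > π_{i+2}. -/
noncomputable def dd {n : ℕ} (π : Equiv.Perm (Fin n)) : ℕ :=
  ((Finset.range n).filter (fun i => Desc π i ∧ Desc π (i + 1))).card

/-- π has no double ascents: no i with π_i < π_{i+1} < π_{i+2}. -/
def NoDoubleAsc {n : ℕ} (π : Equiv.Perm (Fin n)) : Prop :=
  ∀ i : ℕ, ¬ (Asc π i ∧ Asc π (i + 1))

/-- α_n(a,b) = Σ 2^{dd(π)} over permutations of [n] with no double ascents whose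
descent word starts with an ascent and ends with a descent. -/
noncomputable def alphaAB (n : ℕ) : ℕ :=
  ∑ π ∈ Finset.univ.filter
      (fun π : Equiv.Perm (Fin n) => NoDoubleAsc π ∧ Asc π 0 ∧ Desc π (n - 2)),
    2 ^ dd π

namespace AlphaProof

open Equiv


def TT (m j : ℕ) : ℕ := ∑ i ∈ range (j+1), j.choose i * numDerangements (m - i)

lemma TT_pascal (m j : ℕ) : TT (m+1) (j+1) = TT (m+1) j + TT m j := by
  unfold TT
  rw [Finset.sum_range_succ' (fun i => (j+1).choose i * numDerangements (m + 1 - i))]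
  rw [Finset.sum_range_succ' (fun i => j.choose i * numDerangements (m + 1 - i))]
  simp only [Nat.choose_succ_succ, Nat.choose_zero_right, one_mul, add_mul,
    Nat.succ_sub_succ_eq_sub]
  rw [Finset.sum_add_distrib]
  have h2 : ∑ i ∈ range (j+1), j.choose (i+1) * numDerangements (m - i)
      = ∑ i ∈ range j, j.choose (i+1) * numDerangements (m - i) := by
    rw [Finset.sum_range_succ, Nat.choose_succ_self, zero_mul, add_zero]
  rw [h2]; ring

lemma sum_choose_numDerangements (n : ℕ) :
    ∑ j ∈ range (n+1), n.choose j * numDerangements (n - j) = n.factorial := by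
  classical
  symm
  have hcard : (univ : Finset (Equiv.Perm (Fin n))).card
      = ∑ s ∈ (univ : Finset (Fin n)).powerset,
          (univ.filter (fun π : Equiv.Perm (Fin n) =>
            univ.filter (fun x => π x = x) = s)).card := by
    apply Finset.card_eq_sum_card_fiberwise
    intro π _
    exact Finset.mem_powerset.2 (Finset.filter_subset _ _)
  have hfiber : ∀ s : Finset (Fin n),
      (univ.filter (fun π : Equiv.Perm (Fin n) =>
        univ.filter (fun x => π x = x) = s)).card = numDerangements (n - s.card) := by
    intro s
    have e1 : {π : Equiv.Perm (Fin n) // univ.filter (fun x => π x = x) = s}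
        ≃ {f : Equiv.Perm (Fin n) // ∀ a, ¬ (a ∉ s) ↔ a ∈ Function.fixedPoints f} := by
      apply Equiv.subtypeEquivRight
      intro π
      constructor
      · intro h a
        rw [← h]
        simp [Function.mem_fixedPoints, Function.IsFixedPt, eq_comm]
      · intro h
        ext a
        simp only [Finset.mem_filter, Finset.mem_univ, true_and]
        have := h a
        simp only [not_not, Function.mem_fixedPoints, Function.IsFixedPt] at this
        rw [← this]
    have e2 := e1.trans (derangements.subtypeEquiv (fun a : Fin n => a ∉ s)).symm
    have hc1 : (univ.filter (fun π : Equiv.Perm (Fin n) =>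
        univ.filter (fun x => π x = x) = s)).card
        = Fintype.card {π : Equiv.Perm (Fin n) // univ.filter (fun x => π x = x) = s} :=
      (Fintype.card_subtype _).symm
    rw [hc1, Fintype.card_congr e2, card_derangements_eq_numDerangements]
    congr 1
    have h2 : Fintype.card {a : Fin n // ¬ a ∈ s} = Fintype.card (Fin n) - Fintype.card {a : Fin n // a ∈ s} :=
      Fintype.card_subtype_compl _
    rw [h2, Fintype.card_fin, Fintype.card_coe]
  calc (n.factorial : ℕ) = (univ : Finset (Equiv.Perm (Fin n))).card := by
        rw [Finset.card_univ, Fintype.card_perm, Fintype.card_fin]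
    _ = ∑ s ∈ (univ : Finset (Fin n)).powerset, numDerangements (n - s.card) := by
        rw [hcard]; exact Finset.sum_congr rfl (fun s _ => hfiber s)
    _ = ∑ j ∈ range (n+1), n.choose j • numDerangements (n - j) := by
        have := Finset.sum_powerset_apply_card (fun j => numDerangements (n - j))
          (x := (univ : Finset (Fin n)))
        simpa using this
    _ = _ := by simp [smul_eq_mul]

lemma TT_self (m : ℕ) : TT m m = m.factorial := sum_choose_numDerangements m

lemma sum_mul_choose_numDerangements (n : ℕ) :
    ∑ j ∈ range (n+2), j * ((n+1).choose j * numDerangements (n + 1 - j)) = (n+1).factorial := by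
  rw [Finset.sum_range_succ' (fun j => j * ((n+1).choose j * numDerangements (n + 1 - j)))]
  simp only [zero_mul, add_zero, Nat.succ_sub_succ_eq_sub]
  have h : ∀ i, (i+1) * ((n+1).choose (i+1) * numDerangements (n - i))
      = (n+1) * (n.choose i * numDerangements (n - i)) := by
    intro i
    have h2 : (i+1) * (n+1).choose (i+1) = (n+1) * n.choose i := by
      rw [mul_comm ((i:ℕ)+1) _]
      exact (Nat.add_one_mul_choose_eq n i).symm
    rw [← mul_assoc, h2, mul_assoc]
  simp only [h]
  rw [← Finset.mul_sum, sum_choose_numDerangements, Nat.factorial_succ]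


lemma sum_Ico_choose_succ (i N : ℕ) :
    ∑ j ∈ Ico i N, (j+1).choose (i+1) = (N+1).choose (i+2) := by
  have h1 : ∑ l ∈ Ico (i+1) (N+1), l.choose (i+1) = ∑ j ∈ Ico i N, (j+1).choose (i+1) := by
    rw [← Finset.map_add_right_Ico i N 1, Finset.sum_map]
    rfl
  rcases Nat.lt_or_ge i N with h | h
  · rw [← h1, Finset.Ico_add_one_right_eq_Icc, Nat.sum_Icc_choose]
  · rw [Finset.Ico_eq_empty (by omega), Finset.sum_empty]
    symm
    apply Nat.choose_eq_zero_of_lt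
    omega

lemma AR (m : ℕ) :
    (∑ k ∈ range (m+2), (TT (m+1) k : ℤ)) + 2 * numDerangements (m+2)
      = (∑ k ∈ range (m+2), ((k : ℤ) * TT m (k-1))) + (m+2).factorial := by
  have X : ∑ j ∈ range (m+3), ((m+2).choose j : ℤ) * numDerangements (m+2 - j)
      = ((m+2).factorial : ℤ) := by
    have h := sum_choose_numDerangements (m+2)
    rw [← h]
    push_cast
    try rfl
  have Y : ∑ j ∈ range (m+3), (j : ℤ) * ((m+2).choose j * numDerangements (m+2 - j))
      = ((m+2).factorial : ℤ) := by
    have h : ∑ j ∈ range (m+3), j * ((m+2).choose j * numDerangements (m+2 - j))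
        = (m+2).factorial := sum_mul_choose_numDerangements (m+1)
    rw [← h]
    push_cast
    try rfl
  -- S1: hockey stick for the first sum
  have S1 : ∑ k ∈ range (m+2), (TT (m+1) k : ℤ)
      = ∑ i ∈ range (m+2), ((m+2).choose (i+1) : ℤ) * numDerangements (m+1 - i) := by
    unfold TT
    push_cast
    have htri : ∑ k ∈ range (m+2), ∑ i ∈ range (k+1),
          ((k.choose i : ℤ) * numDerangements (m+1 - i))
        = ∑ i ∈ range (m+2), ∑ k ∈ Ico i (m+2), ((k.choose i : ℤ) * numDerangements (m+1 - i)) := by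
      simp only [Finset.range_eq_Ico]
      rw [← Finset.sum_Ico_Ico_comm 0 (m+2) (fun i k => ((k.choose i : ℤ) * numDerangements (m+1 - i)))]
      try (apply Finset.sum_congr rfl; intro k _; rw [Finset.range_eq_Ico])
    rw [htri]
    apply Finset.sum_congr rfl
    intro i _
    rw [← Finset.sum_mul]
    congr 1
    have : ∑ k ∈ Ico i (m+2), (k.choose i : ℤ)
        = ((∑ k ∈ Icc i (m+1), k.choose i : ℕ) : ℤ) := by
      rw [← Finset.Ico_add_one_right_eq_Icc]; push_cast; try rfl
    rw [this, Nat.sum_Icc_choose]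
  -- S2: second sum
  have S2 : ∑ k ∈ range (m+2), ((k : ℤ) * TT m (k-1))
      = ∑ i ∈ range (m+1), (((i:ℤ)+1) * (m+2).choose (i+2)) * numDerangements (m - i) := by
    rw [Finset.sum_range_succ' (fun k => (k : ℤ) * TT m (k-1))]
    simp only [Nat.cast_zero, zero_mul, add_zero, Nat.add_sub_cancel]
    unfold TT
    push_cast
    have hmul : ∀ j ∈ range (m+1), ((j:ℤ)+1) * ∑ i ∈ range (j+1),
          ((j.choose i : ℤ) * numDerangements (m - i))
        = ∑ i ∈ range (j+1), (((i:ℤ)+1) * (j+1).choose (i+1) * numDerangements (m - i)) := by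
      intro j _
      rw [Finset.mul_sum]
      apply Finset.sum_congr rfl
      intro i _
      have hnat := Nat.add_one_mul_choose_eq j i
      have h2 : ((j:ℤ)+1) * (j.choose i : ℤ) = ((i:ℤ)+1) * ((j+1).choose (i+1) : ℤ) := by
        have hc := congrArg (fun t : ℕ => (t : ℤ)) hnat
        push_cast at hc
        linarith [hc]
      rw [← mul_assoc, h2]
    rw [Finset.sum_congr rfl hmul]
    have htri : ∑ j ∈ range (m+1), ∑ i ∈ range (j+1),
          (((i:ℤ)+1) * (j+1).choose (i+1) * numDerangements (m - i))
        = ∑ i ∈ range (m+1), ∑ j ∈ Ico i (m+1),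
          (((i:ℤ)+1) * (j+1).choose (i+1) * numDerangements (m - i)) := by
      simp only [Finset.range_eq_Ico]
      rw [← Finset.sum_Ico_Ico_comm 0 (m+1)
        (fun i j => (((i:ℤ)+1) * (j+1).choose (i+1) * numDerangements (m - i)))]
      try (apply Finset.sum_congr rfl; intro j _; rw [Finset.range_eq_Ico])
    rw [htri]
    apply Finset.sum_congr rfl
    intro i _
    have : ∀ j ∈ Ico i (m+1), ((i:ℤ)+1) * (j+1).choose (i+1) * numDerangements (m - i)
        = ((j+1).choose (i+1) : ℤ) * (((i:ℤ)+1) * numDerangements (m - i)) := by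
      intro j _; ring
    rw [Finset.sum_congr rfl this, ← Finset.sum_mul]
    have hh : ∑ j ∈ Ico i (m+1), ((j+1).choose (i+1) : ℤ)
        = ((∑ j ∈ Ico i (m+1), (j+1).choose (i+1) : ℕ) : ℤ) := by push_cast; rfl
    rw [hh, sum_Ico_choose_succ]
    try ring
  -- relate S1 to X : split off j = 0
  have hX : ∑ i ∈ range (m+2), ((m+2).choose (i+1) : ℤ) * numDerangements (m+1 - i)
      = ((m+2).factorial : ℤ) - numDerangements (m+2) := by
    rw [← X, Finset.sum_range_succ'
      (fun j => ((m+2).choose j : ℤ) * numDerangements (m+2 - j))]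
    simp only [Nat.choose_zero_right, Nat.cast_one, one_mul, Nat.sub_zero,
      Nat.succ_sub_succ_eq_sub]
    ring
  -- relate S2 to Y - X : split off j = 0 and j = 1
  have hY : ∑ i ∈ range (m+1), (((i:ℤ)+1) * (m+2).choose (i+2)) * numDerangements (m - i)
      = numDerangements (m+2) := by
    have hZ : ∑ j ∈ range (m+3), (((j:ℤ) - 1) * ((m+2).choose j * numDerangements (m+2 - j)))
        = ∑ j ∈ range (m+3), ((j:ℤ) * ((m+2).choose j * numDerangements (m+2 - j)))
          - ∑ j ∈ range (m+3), (((m+2).choose j : ℤ) * numDerangements (m+2 - j)) := by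
      rw [← Finset.sum_sub_distrib]
      apply Finset.sum_congr rfl
      intro j _; ring
    rw [X, Y] at hZ
    have e1 := Finset.sum_range_succ'
      (fun j => (((j:ℤ) - 1) * ((m+2).choose j * numDerangements (m+2 - j)))) (m+2)
    have e2 := Finset.sum_range_succ'
      (fun i => ((((i+1 : ℕ) : ℤ) - 1) * ((m+2).choose (i+1) * numDerangements (m+2 - (i+1))))) (m+1)
    rw [e1, e2] at hZ
    have hsimp : ∑ i ∈ range (m+1),
          ((((i+1+1 : ℕ) : ℤ) - 1) * ((m+2).choose (i+1+1) * numDerangements (m+2 - (i+1+1))))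
        = ∑ i ∈ range (m+1), (((i:ℤ)+1) * (m+2).choose (i+2)) * numDerangements (m - i) := by
      apply Finset.sum_congr rfl
      intro i _
      have hmi : m + 2 - (i+1+1) = m - i := by omega
      rw [hmi]; push_cast; ring
    rw [hsimp] at hZ
    norm_num at hZ
    linarith [hZ]
  rw [S1, S2, hX, hY]
  ring


/-- insert value `k` at the front. -/
def insFun {n : ℕ} (k : Fin (n+1)) (σ : Perm (Fin n)) : Fin (n+1) → Fin (n+1) :=
  Fin.cons k (fun i => k.succAbove (σ i))

lemma insFun_injective {n : ℕ} (k : Fin (n+1)) (σ : Perm (Fin n)) :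
    Function.Injective (insFun k σ) := by
  intro a b hab
  induction a using Fin.cases with
  | zero =>
    induction b using Fin.cases with
    | zero => rfl
    | succ j =>
      exfalso
      rw [insFun, Fin.cons_zero, Fin.cons_succ] at hab
      exact Fin.succAbove_ne k (σ j) hab.symm
  | succ i =>
    induction b using Fin.cases with
    | zero =>
      exfalso
      rw [insFun, Fin.cons_zero, Fin.cons_succ] at hab
      exact Fin.succAbove_ne k (σ i) hab
    | succ j =>
      rw [insFun, Fin.cons_succ, Fin.cons_succ] at hab
      have := Fin.succAbove_right_injective (p := k) hab
      rw [σ.injective this]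

noncomputable def insPerm {n : ℕ} (k : Fin (n+1)) (σ : Perm (Fin n)) : Perm (Fin (n+1)) :=
  Equiv.ofBijective _ (Finite.injective_iff_bijective.1 (insFun_injective k σ))

@[simp] lemma insPerm_zero {n : ℕ} (k : Fin (n+1)) (σ : Perm (Fin n)) (h : 0 < n+1) :
    insPerm k σ ⟨0, h⟩ = k := rfl

@[simp] lemma insPerm_succ {n : ℕ} (k : Fin (n+1)) (σ : Perm (Fin n)) (i : Fin n) :
    insPerm k σ i.succ = k.succAbove (σ i) := by
  show insFun k σ i.succ = _
  rw [insFun, Fin.cons_succ]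

lemma sum_insPerm {n : ℕ} {M : Type*} [AddCommMonoid M] (F : Perm (Fin (n+1)) → M) :
    ∑ π : Perm (Fin (n+1)), F π
      = ∑ k : Fin (n+1), ∑ σ : Perm (Fin n), F (insPerm k σ) := by
  have hbij : Function.Bijective (fun p : Fin (n+1) × Perm (Fin n) => insPerm p.1 p.2) := by
    rw [Fintype.bijective_iff_injective_and_card]
    constructor
    · rintro ⟨k, σ⟩ ⟨k', σ'⟩ h
      have h0 : k = k' := by
        have := congrArg (fun π : Perm (Fin (n+1)) => π ⟨0, Nat.succ_pos n⟩) h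
        exact this
      subst h0
      have hσ : σ = σ' := by
        ext i
        have := congrArg (fun π : Perm (Fin (n+1)) => π i.succ) h
        simp only [insPerm_succ] at this
        exact Fin.val_eq_of_eq (Fin.succAbove_right_injective this)
      rw [hσ]
    · simp [Fintype.card_perm, Fintype.card_fin, Nat.factorial_succ]
  calc ∑ π : Perm (Fin (n+1)), F π
      = ∑ p : Fin (n+1) × Perm (Fin n), F (insPerm p.1 p.2) :=
        (Fintype.sum_bijective _ hbij _ _ (fun p => rfl)).symm
    _ = ∑ k : Fin (n+1), ∑ σ : Perm (Fin n), F (insPerm k σ) := Fintype.sum_prod_type (fun p : Fin (n+1) × Perm (Fin n) => F (insPerm p.1 p.2))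

section transfer

variable {n : ℕ} (k : Fin (n+1)) (σ : Perm (Fin n))

lemma asc_ins_succ (i : ℕ) : Asc (insPerm k σ) (i+1) ↔ Asc σ i := by
  constructor
  · rintro ⟨h, hlt⟩
    have h' : i + 1 < n := by omega
    refine ⟨h', ?_⟩
    have e1 : (⟨i+1, Nat.lt_of_succ_lt h⟩ : Fin (n+1)) = Fin.succ ⟨i, by omega⟩ := rfl
    have e2 : (⟨i+1+1, h⟩ : Fin (n+1)) = Fin.succ ⟨i+1, h'⟩ := rfl
    rw [e1, e2, insPerm_succ, insPerm_succ] at hlt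
    exact (Fin.succAbove_lt_succAbove_iff (p := k)).1 hlt
  · rintro ⟨h, hlt⟩
    refine ⟨by omega, ?_⟩
    have e1 : (⟨i+1, by omega⟩ : Fin (n+1)) = Fin.succ ⟨i, by omega⟩ := rfl
    have e2 : (⟨i+1+1, by omega⟩ : Fin (n+1)) = Fin.succ ⟨i+1, h⟩ := rfl
    rw [e1, e2, insPerm_succ, insPerm_succ]
    exact (Fin.succAbove_lt_succAbove_iff (p := k)).2 hlt

lemma desc_ins_succ (i : ℕ) : Desc (insPerm k σ) (i+1) ↔ Desc σ i := by
  constructor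
  · rintro ⟨h, hlt⟩
    have h' : i + 1 < n := by omega
    refine ⟨h', ?_⟩
    have e1 : (⟨i+1, Nat.lt_of_succ_lt h⟩ : Fin (n+1)) = Fin.succ ⟨i, by omega⟩ := rfl
    have e2 : (⟨i+1+1, h⟩ : Fin (n+1)) = Fin.succ ⟨i+1, h'⟩ := rfl
    rw [e1, e2, insPerm_succ, insPerm_succ] at hlt
    exact (Fin.succAbove_lt_succAbove_iff (p := k)).1 hlt
  · rintro ⟨h, hlt⟩
    refine ⟨by omega, ?_⟩
    have e1 : (⟨i+1, by omega⟩ : Fin (n+1)) = Fin.succ ⟨i, by omega⟩ := rfl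
    have e2 : (⟨i+1+1, by omega⟩ : Fin (n+1)) = Fin.succ ⟨i+1, h⟩ := rfl
    rw [e1, e2, insPerm_succ, insPerm_succ]
    exact (Fin.succAbove_lt_succAbove_iff (p := k)).2 hlt

lemma asc_ins_zero (hn : 0 < n) :
    Asc (insPerm k σ) 0 ↔ (k : ℕ) ≤ (σ ⟨0, hn⟩ : ℕ) := by
  constructor
  · rintro ⟨h, hlt⟩
    have e1 : (⟨0, Nat.lt_of_succ_lt h⟩ : Fin (n+1)) = ⟨0, Nat.succ_pos n⟩ := rfl
    have e2 : (⟨0+1, h⟩ : Fin (n+1)) = Fin.succ ⟨0, hn⟩ := rfl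
    rw [e1, e2, insPerm_zero, insPerm_succ] at hlt
    have := (Fin.lt_succAbove_iff_le_castSucc k (σ ⟨0, hn⟩)).1 hlt
    simpa [Fin.le_def] using this
  · intro hle
    refine ⟨by omega, ?_⟩
    have e1 : (⟨0, by omega⟩ : Fin (n+1)) = ⟨0, Nat.succ_pos n⟩ := rfl
    have e2 : (⟨0+1, by omega⟩ : Fin (n+1)) = Fin.succ ⟨0, hn⟩ := rfl
    rw [e1, e2, insPerm_zero, insPerm_succ]
    apply (Fin.lt_succAbove_iff_le_castSucc k (σ ⟨0, hn⟩)).2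
    simpa [Fin.le_def] using hle

lemma desc_ins_zero (hn : 0 < n) :
    Desc (insPerm k σ) 0 ↔ (σ ⟨0, hn⟩ : ℕ) < (k : ℕ) := by
  constructor
  · rintro ⟨h, hlt⟩
    have e1 : (⟨0, Nat.lt_of_succ_lt h⟩ : Fin (n+1)) = ⟨0, Nat.succ_pos n⟩ := rfl
    have e2 : (⟨0+1, h⟩ : Fin (n+1)) = Fin.succ ⟨0, hn⟩ := rfl
    rw [e1, e2, insPerm_zero, insPerm_succ] at hlt
    have := (Fin.succAbove_lt_iff_castSucc_lt k (σ ⟨0, hn⟩)).1 hlt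
    simpa [Fin.lt_def] using this
  · intro hle
    refine ⟨by omega, ?_⟩
    have e1 : (⟨0, by omega⟩ : Fin (n+1)) = ⟨0, Nat.succ_pos n⟩ := rfl
    have e2 : (⟨0+1, by omega⟩ : Fin (n+1)) = Fin.succ ⟨0, hn⟩ := rfl
    rw [e1, e2, insPerm_zero, insPerm_succ]
    apply (Fin.succAbove_lt_iff_castSucc_lt k (σ ⟨0, hn⟩)).2
    simpa [Fin.lt_def] using hle

lemma not_asc_iff_desc {n : ℕ} (σ : Perm (Fin n)) (i : ℕ) (h : i + 1 < n) :
    ¬ Asc σ i ↔ Desc σ i := by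
  constructor
  · intro hna
    refine ⟨h, ?_⟩
    rcases lt_trichotomy (σ ⟨i+1, h⟩) (σ ⟨i, Nat.lt_of_succ_lt h⟩) with hlt | heq | hgt
    · exact hlt
    · exfalso
      have := σ.injective heq
      have : (i+1 : ℕ) = i := congrArg Fin.val this
      omega
    · exact absurd ⟨h, hgt⟩ hna
  · rintro ⟨h1, hlt⟩ ⟨h2, hlt2⟩
    exact absurd hlt2 (not_lt.2 hlt.le)

lemma dd_ins :
    dd (insPerm k σ) = dd σ +
      (if Desc (insPerm k σ) 0 ∧ Desc (insPerm k σ) 1 then 1 else 0) := by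
  unfold dd
  rw [Finset.card_filter, Finset.card_filter]
  rw [Finset.sum_range_succ'
    (fun i => if Desc (insPerm k σ) i ∧ Desc (insPerm k σ) (i+1) then 1 else 0) n]
  congr 1
  apply Finset.sum_congr rfl
  intro i _
  refine if_congr (and_congr ?_ ?_) rfl rfl
  · exact desc_ins_succ k σ i
  · exact desc_ins_succ k σ (i+1)

lemma noDoubleAsc_ins :
    NoDoubleAsc (insPerm k σ) ↔
      (¬ (Asc (insPerm k σ) 0 ∧ Asc (insPerm k σ) 1)) ∧ NoDoubleAsc σ := by
  constructor
  · intro h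
    refine ⟨h 0, fun i hi => ?_⟩
    exact h (i+1) ⟨(asc_ins_succ k σ i).2 hi.1, (asc_ins_succ k σ (i+1)).2 hi.2⟩
  · rintro ⟨h0, h⟩ i hi
    cases i with
    | zero => exact h0 hi
    | succ j => exact h j ⟨(asc_ins_succ k σ j).1 hi.1, (asc_ins_succ k σ (j+1)).1 hi.2⟩

end transfer

/-! ### helpers -/

lemma sum_fin_indicator {N : ℕ} {M : Type*} [AddCommMonoid M] (kk : ℕ) (v : M) (Q : Prop)
    [∀ k' : Fin N, Decidable ((k' : ℕ) = kk ∧ Q)] [Decidable (kk < N ∧ Q)] :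
    ∑ k' : Fin N, (if ((k' : ℕ) = kk ∧ Q) then v else 0) = if (kk < N ∧ Q) then v else 0 := by
  by_cases hq : Q
  · simp only [hq, and_true]
    by_cases hk : kk < N
    · rw [if_pos hk]
      rw [Finset.sum_eq_single (⟨kk, hk⟩ : Fin N)]
      · rw [if_pos rfl]
      · intro b _ hb
        rw [if_neg]
        intro hbk
        exact hb (Fin.ext hbk)
      · intro h; exact absurd (Finset.mem_univ _) h
    · rw [if_neg hk, Finset.sum_eq_zero]
      intro b _
      rw [if_neg]
      intro hbk
      exact hk (hbk ▸ b.isLt)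
  · simp [hq]

lemma sum_fiber_first {m : ℕ} {M : Type*} [AddCommMonoid M] (f : Perm (Fin (m+2)) → M) :
    ∑ σ : Perm (Fin (m+2)), f σ
      = ∑ j ∈ range (m+2), ∑ σ : Perm (Fin (m+2)),
          (if ((σ ⟨0, Nat.succ_pos _⟩ : Fin (m+2)) : ℕ) = j then f σ else 0) := by
  rw [Finset.sum_comm]
  apply Finset.sum_congr rfl
  intro σ _
  rw [Finset.sum_ite_eq (range (m+2)) ((σ ⟨0, Nat.succ_pos _⟩ : Fin (m+2)) : ℕ) (fun _ => f σ),
    if_pos (Finset.mem_range.2 (Fin.is_lt _))]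

lemma sum_ite_pull {M : Type*} [AddCommMonoid M] {α : Type*} [Fintype α]
    (c : Prop) [Decidable c] (f : α → M) :
    ∑ x : α, (if c then f x else 0) = if c then (∑ x : α, f x) else 0 := by
  by_cases hc : c <;> simp [hc]

/-! ### the two weighted counts -/

noncomputable def FFp (m k : ℕ) : ℕ :=
  ∑ π ∈ Finset.univ.filter (fun π : Perm (Fin (m+2)) =>
      NoDoubleAsc π ∧ Desc π 0 ∧ Desc π m ∧ ((π ⟨0, Nat.succ_pos _⟩ : Fin (m+2)) : ℕ) = k),
    2 ^ dd π

noncomputable def GGp (m k : ℕ) : ℕ :=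
  ∑ π ∈ Finset.univ.filter (fun π : Perm (Fin (m+2)) =>
      NoDoubleAsc π ∧ Asc π 0 ∧ Desc π m ∧ ((π ⟨0, Nat.succ_pos _⟩ : Fin (m+2)) : ℕ) = k),
    2 ^ dd π

lemma GGp_zero (k : ℕ) : GGp 0 k = 0 := by
  unfold GGp
  apply Finset.sum_eq_zero
  intro π hπ
  rw [Finset.mem_filter] at hπ
  obtain ⟨-, -, ha, hd, -⟩ := hπ
  obtain ⟨h1, lt1⟩ := ha
  obtain ⟨h2, lt2⟩ := hd
  exact absurd lt2 (not_lt.2 lt1.le)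

lemma dd_two (π : Perm (Fin 2)) : dd π = 0 := by
  unfold dd
  rw [Finset.card_eq_zero, Finset.filter_eq_empty_iff]
  rintro i -
  rintro ⟨-, ⟨h, -⟩⟩
  omega

lemma noDoubleAsc_two (π : Perm (Fin 2)) : NoDoubleAsc π := by
  rintro i ⟨-, ⟨h, -⟩⟩
  omega

lemma desc_two_iff (π : Perm (Fin 2)) : Desc π 0 ↔ π = Equiv.swap 0 1 := by
  constructor
  · rintro ⟨h, hlt⟩
    have hv1 : ((π ⟨1, h⟩ : Fin 2) : ℕ) < ((π ⟨0, Nat.lt_of_succ_lt h⟩ : Fin 2) : ℕ) := hlt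
    have b0 : ((π ⟨0, Nat.lt_of_succ_lt h⟩ : Fin 2) : ℕ) < 2 := Fin.is_lt _
    have b1 : ((π ⟨1, h⟩ : Fin 2) : ℕ) < 2 := Fin.is_lt _
    have e0 : ((π ⟨0, Nat.lt_of_succ_lt h⟩ : Fin 2) : ℕ) = 1 := by omega
    have e1 : ((π ⟨1, h⟩ : Fin 2) : ℕ) = 0 := by omega
    ext i
    fin_cases i
    · show ((π ⟨0, by omega⟩ : Fin 2) : ℕ) = ((Equiv.swap (0 : Fin 2) 1) 0 : ℕ)
      rw [e0]; decide
    · show ((π ⟨1, by omega⟩ : Fin 2) : ℕ) = ((Equiv.swap (0 : Fin 2) 1) 1 : ℕ)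
      rw [e1]; decide
  · rintro rfl
    exact ⟨by omega, by decide⟩

lemma FFp_zero (k : ℕ) : FFp 0 k = if k = 1 then 1 else 0 := by
  unfold FFp
  by_cases hk : k = 1
  · subst hk
    rw [if_pos rfl]
    rw [Finset.sum_eq_single (Equiv.swap (0 : Fin 2) 1)]
    · rw [dd_two, pow_zero]
    · intro π hπ hne
      exfalso
      rw [Finset.mem_filter] at hπ
      exact hne ((desc_two_iff π).1 hπ.2.2.1)
    · intro hmem
      exfalso
      apply hmem
      rw [Finset.mem_filter]
      refine ⟨Finset.mem_univ _, noDoubleAsc_two _, (desc_two_iff _).2 rfl,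
        (desc_two_iff _).2 rfl, ?_⟩
      decide
  · rw [if_neg hk]
    apply Finset.sum_eq_zero
    intro π hπ
    exfalso
    rw [Finset.mem_filter] at hπ
    obtain ⟨-, -, hd, -, hval⟩ := hπ
    have := (desc_two_iff π).1 hd
    subst this
    apply hk
    rw [← hval]
    decide

/-! ### the recurrences -/

lemma GGp_rec (m k : ℕ) :
    GGp (m+1) k = ∑ j ∈ range (m+2), if k ≤ j then FFp m j else 0 := by
  have h02 : (0:ℕ) + 1 < m + 2 := by omega
  unfold GGp
  rw [Finset.sum_filter]
  have hins' : (∑ π : Perm (Fin (m+1+2)),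
        if (NoDoubleAsc π ∧ Asc π 0 ∧ Desc π (m+1)
            ∧ ((π ⟨0, Nat.succ_pos _⟩ : Fin (m+1+2)) : ℕ) = k) then 2 ^ dd π else 0)
      = ∑ k' : Fin (m+2+1), ∑ σ : Perm (Fin (m+2)),
          (if (NoDoubleAsc (insPerm k' σ) ∧ Asc (insPerm k' σ) 0 ∧ Desc (insPerm k' σ) (m+1)
            ∧ (((insPerm k' σ) ⟨0, Nat.succ_pos _⟩ : Fin (m+2+1)) : ℕ) = k)
            then 2 ^ dd (insPerm k' σ) else 0) :=
    sum_insPerm (n := m+2) _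
  rw [hins']
  have hpt : ∀ (k' : Fin (m+2+1)) (σ : Perm (Fin (m+2))),
      (if (NoDoubleAsc (insPerm k' σ) ∧ Asc (insPerm k' σ) 0 ∧ Desc (insPerm k' σ) (m+1)
            ∧ (((insPerm k' σ) ⟨0, Nat.succ_pos _⟩ : Fin (m+2+1)) : ℕ) = k)
            then 2 ^ dd (insPerm k' σ) else 0)
      = (if ((k' : ℕ) = k ∧ (k ≤ ((σ ⟨0, Nat.succ_pos _⟩ : Fin (m+2)) : ℕ)
            ∧ (NoDoubleAsc σ ∧ Desc σ 0 ∧ Desc σ m))) then 2 ^ dd σ else 0) := by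
    intro k' σ
    have hiff : (NoDoubleAsc (insPerm k' σ) ∧ Asc (insPerm k' σ) 0 ∧ Desc (insPerm k' σ) (m+1)
            ∧ (((insPerm k' σ) ⟨0, Nat.succ_pos _⟩ : Fin (m+2+1)) : ℕ) = k)
        ↔ ((k' : ℕ) = k ∧ (k ≤ ((σ ⟨0, Nat.succ_pos _⟩ : Fin (m+2)) : ℕ)
            ∧ (NoDoubleAsc σ ∧ Desc σ 0 ∧ Desc σ m))) := by
      constructor
      · rintro ⟨hnda, ha0, hdm, hval⟩
        have hk' : (k' : ℕ) = k := by rw [insPerm_zero] at hval; exact hval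
        have hks : (k' : ℕ) ≤ ((σ ⟨0, Nat.succ_pos _⟩ : Fin (m+2)) : ℕ) :=
          (asc_ins_zero k' σ (Nat.succ_pos _)).1 ha0
        refine ⟨hk', by omega, ((noDoubleAsc_ins k' σ).1 hnda).2, ?_,
          (desc_ins_succ k' σ m).1 hdm⟩
        have hno := ((noDoubleAsc_ins k' σ).1 hnda).1
        have hna1 : ¬ Asc σ 0 := fun h => hno ⟨ha0, (asc_ins_succ k' σ 0).2 h⟩
        exact (not_asc_iff_desc σ 0 h02).1 hna1
      · rintro ⟨hk', hks, hnda, hd0, hdm⟩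
        have ha0 : Asc (insPerm k' σ) 0 :=
          (asc_ins_zero k' σ (Nat.succ_pos _)).2 (by omega)
        refine ⟨?_, ha0, (desc_ins_succ k' σ m).2 hdm, by rw [insPerm_zero]; exact hk'⟩
        apply (noDoubleAsc_ins k' σ).2
        refine ⟨?_, hnda⟩
        rintro ⟨-, h1⟩
        exact ((not_asc_iff_desc σ 0 h02).2 hd0) ((asc_ins_succ k' σ 0).1 h1)
    by_cases hcond : ((k' : ℕ) = k ∧ (k ≤ ((σ ⟨0, Nat.succ_pos _⟩ : Fin (m+2)) : ℕ)
            ∧ (NoDoubleAsc σ ∧ Desc σ 0 ∧ Desc σ m)))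
    · rw [if_pos (hiff.2 hcond), if_pos hcond]
      congr 1
      rw [dd_ins, if_neg, add_zero]
      rintro ⟨hd0, -⟩
      have hlt := (desc_ins_zero k' σ (Nat.succ_pos _)).1 hd0
      obtain ⟨h1, h2, -⟩ := hcond
      omega
    · rw [if_neg (fun h => hcond (hiff.1 h)), if_neg hcond]
  rw [Finset.sum_congr rfl (fun k' _ => Finset.sum_congr rfl (fun σ _ => hpt k' σ))]
  rw [Finset.sum_comm]
  have hfin : ∀ σ : Perm (Fin (m+2)),
      (∑ k' : Fin (m+2+1), if ((k' : ℕ) = k ∧ (k ≤ ((σ ⟨0, Nat.succ_pos _⟩ : Fin (m+2)) : ℕ)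
            ∧ (NoDoubleAsc σ ∧ Desc σ 0 ∧ Desc σ m))) then 2 ^ dd σ else 0)
      = if (k ≤ ((σ ⟨0, Nat.succ_pos _⟩ : Fin (m+2)) : ℕ)
            ∧ (NoDoubleAsc σ ∧ Desc σ 0 ∧ Desc σ m)) then 2 ^ dd σ else 0 := by
    intro σ
    rw [sum_fin_indicator k (2 ^ dd σ)]
    refine if_congr ⟨fun h => h.2, fun h => ⟨?_, h⟩⟩ rfl rfl
    have := (σ ⟨0, Nat.succ_pos _⟩).is_lt
    omega
  rw [Finset.sum_congr rfl (fun σ _ => hfin σ)]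
  rw [sum_fiber_first (f := fun σ => if (k ≤ ((σ ⟨0, Nat.succ_pos _⟩ : Fin (m+2)) : ℕ)
            ∧ (NoDoubleAsc σ ∧ Desc σ 0 ∧ Desc σ m)) then 2 ^ dd σ else 0)]
  apply Finset.sum_congr rfl
  intro j hj
  have hpt2 : ∀ σ : Perm (Fin (m+2)),
      (if ((σ ⟨0, Nat.succ_pos _⟩ : Fin (m+2)) : ℕ) = j
        then (if (k ≤ ((σ ⟨0, Nat.succ_pos _⟩ : Fin (m+2)) : ℕ)
            ∧ (NoDoubleAsc σ ∧ Desc σ 0 ∧ Desc σ m)) then (2:ℕ) ^ dd σ else 0) else 0)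
      = if k ≤ j then (if (NoDoubleAsc σ ∧ Desc σ 0 ∧ Desc σ m
            ∧ ((σ ⟨0, Nat.succ_pos _⟩ : Fin (m+2)) : ℕ) = j) then 2 ^ dd σ else 0) else 0 := by
    intro σ
    by_cases h1 : ((σ ⟨0, Nat.succ_pos _⟩ : Fin (m+2)) : ℕ) = j
    · by_cases h2 : k ≤ j
      · by_cases h3 : NoDoubleAsc σ ∧ Desc σ 0 ∧ Desc σ m
        · rw [if_pos h1, if_pos ⟨by omega, h3⟩, if_pos h2,
            if_pos ⟨h3.1, h3.2.1, h3.2.2, h1⟩]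
        · rw [if_pos h1, if_neg (fun hh => h3 hh.2), if_pos h2,
            if_neg (fun hh => h3 ⟨hh.1, hh.2.1, hh.2.2.1⟩)]
      · rw [if_pos h1, if_neg (fun hh => h2 (by omega)), if_neg h2]
    · rw [if_neg h1]
      by_cases h2 : k ≤ j
      · rw [if_pos h2, if_neg (fun hh => h1 hh.2.2.2)]
      · rw [if_neg h2]
  rw [Finset.sum_congr rfl (fun σ _ => hpt2 σ), sum_ite_pull]
  unfold FFp
  rw [Finset.sum_filter]

lemma asc_or_desc {n : ℕ} (σ : Perm (Fin n)) (i : ℕ) (h : i + 1 < n) (hnd : ¬ Desc σ i) :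
    Asc σ i := by
  by_contra hna
  exact hnd ((not_asc_iff_desc σ i h).1 hna)

lemma FFp_rec (m k : ℕ) (hk : k < m + 3) :
    FFp (m+1) k = ∑ j ∈ range (m+2), if j < k then 2 * FFp m j + GGp m j else 0 := by
  have h02 : (0:ℕ) + 1 < m + 2 := by omega
  unfold FFp
  rw [Finset.sum_filter]
  have hins' : (∑ π : Perm (Fin (m+1+2)),
        if (NoDoubleAsc π ∧ Desc π 0 ∧ Desc π (m+1)
            ∧ ((π ⟨0, Nat.succ_pos _⟩ : Fin (m+1+2)) : ℕ) = k) then 2 ^ dd π else 0)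
      = ∑ k' : Fin (m+2+1), ∑ σ : Perm (Fin (m+2)),
          (if (NoDoubleAsc (insPerm k' σ) ∧ Desc (insPerm k' σ) 0 ∧ Desc (insPerm k' σ) (m+1)
            ∧ (((insPerm k' σ) ⟨0, Nat.succ_pos _⟩ : Fin (m+2+1)) : ℕ) = k)
            then 2 ^ dd (insPerm k' σ) else 0) :=
    sum_insPerm (n := m+2) _
  rw [hins']
  have hpt : ∀ (k' : Fin (m+2+1)) (σ : Perm (Fin (m+2))),
      (if (NoDoubleAsc (insPerm k' σ) ∧ Desc (insPerm k' σ) 0 ∧ Desc (insPerm k' σ) (m+1)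
            ∧ (((insPerm k' σ) ⟨0, Nat.succ_pos _⟩ : Fin (m+2+1)) : ℕ) = k)
            then 2 ^ dd (insPerm k' σ) else 0)
      = (if ((k' : ℕ) = k ∧ (((σ ⟨0, Nat.succ_pos _⟩ : Fin (m+2)) : ℕ) < k
            ∧ (NoDoubleAsc σ ∧ Desc σ m)))
          then (if Desc σ 0 then 2 * 2 ^ dd σ else 2 ^ dd σ) else 0) := by
    intro k' σ
    have hiff : (NoDoubleAsc (insPerm k' σ) ∧ Desc (insPerm k' σ) 0 ∧ Desc (insPerm k' σ) (m+1)
            ∧ (((insPerm k' σ) ⟨0, Nat.succ_pos _⟩ : Fin (m+2+1)) : ℕ) = k)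
        ↔ ((k' : ℕ) = k ∧ (((σ ⟨0, Nat.succ_pos _⟩ : Fin (m+2)) : ℕ) < k
            ∧ (NoDoubleAsc σ ∧ Desc σ m))) := by
      constructor
      · rintro ⟨hnda, hd0, hdm, hval⟩
        have hk' : (k' : ℕ) = k := by rw [insPerm_zero] at hval; exact hval
        have hlt := (desc_ins_zero k' σ (Nat.succ_pos _)).1 hd0
        exact ⟨hk', by omega, ((noDoubleAsc_ins k' σ).1 hnda).2,
          (desc_ins_succ k' σ m).1 hdm⟩
      · rintro ⟨hk', hlt, hnda, hdm⟩
        refine ⟨?_, (desc_ins_zero k' σ (Nat.succ_pos _)).2 (by omega),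
          (desc_ins_succ k' σ m).2 hdm, by rw [insPerm_zero]; exact hk'⟩
        apply (noDoubleAsc_ins k' σ).2
        refine ⟨?_, hnda⟩
        rintro ⟨ha0, -⟩
        have := (asc_ins_zero k' σ (Nat.succ_pos _)).1 ha0
        omega
    by_cases hcond : ((k' : ℕ) = k ∧ (((σ ⟨0, Nat.succ_pos _⟩ : Fin (m+2)) : ℕ) < k
            ∧ (NoDoubleAsc σ ∧ Desc σ m)))
    · rw [if_pos (hiff.2 hcond), if_pos hcond]
      obtain ⟨h1, h2, -⟩ := hcond
      have hdπ0 : Desc (insPerm k' σ) 0 :=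
        (desc_ins_zero k' σ (Nat.succ_pos _)).2 (by omega)
      rw [dd_ins]
      by_cases hd : Desc σ 0
      · rw [if_pos ⟨hdπ0, (desc_ins_succ k' σ 0).2 hd⟩, if_pos hd, pow_succ, mul_comm]
      · rw [if_neg (fun hh => hd ((desc_ins_succ k' σ 0).1 hh.2)), add_zero, if_neg hd]
    · rw [if_neg (fun h => hcond (hiff.1 h)), if_neg hcond]
  rw [Finset.sum_congr rfl (fun k' _ => Finset.sum_congr rfl (fun σ _ => hpt k' σ))]
  rw [Finset.sum_comm]
  have hfin : ∀ σ : Perm (Fin (m+2)),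
      (∑ k' : Fin (m+2+1), if ((k' : ℕ) = k ∧ (((σ ⟨0, Nat.succ_pos _⟩ : Fin (m+2)) : ℕ) < k
            ∧ (NoDoubleAsc σ ∧ Desc σ m)))
          then (if Desc σ 0 then 2 * 2 ^ dd σ else 2 ^ dd σ) else 0)
      = if ((((σ ⟨0, Nat.succ_pos _⟩ : Fin (m+2)) : ℕ) < k ∧ (NoDoubleAsc σ ∧ Desc σ m)))
          then (if Desc σ 0 then 2 * 2 ^ dd σ else 2 ^ dd σ) else 0 := by
    intro σ
    rw [sum_fin_indicator k _ _]
    exact if_congr ⟨fun h => h.2, fun h => ⟨by omega, h⟩⟩ rfl rfl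
  rw [Finset.sum_congr rfl (fun σ _ => hfin σ)]
  rw [sum_fiber_first (f := fun σ =>
      if ((((σ ⟨0, Nat.succ_pos _⟩ : Fin (m+2)) : ℕ) < k ∧ (NoDoubleAsc σ ∧ Desc σ m)))
          then (if Desc σ 0 then 2 * 2 ^ dd σ else 2 ^ dd σ) else 0)]
  apply Finset.sum_congr rfl
  intro j hj
  have hpt2 : ∀ σ : Perm (Fin (m+2)),
      (if ((σ ⟨0, Nat.succ_pos _⟩ : Fin (m+2)) : ℕ) = j
        then (if ((((σ ⟨0, Nat.succ_pos _⟩ : Fin (m+2)) : ℕ) < k ∧ (NoDoubleAsc σ ∧ Desc σ m)))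
          then (if Desc σ 0 then 2 * 2 ^ dd σ else 2 ^ dd σ) else 0) else 0)
      = if j < k then
          ((if (NoDoubleAsc σ ∧ Desc σ 0 ∧ Desc σ m
              ∧ ((σ ⟨0, Nat.succ_pos _⟩ : Fin (m+2)) : ℕ) = j) then 2 * 2 ^ dd σ else 0)
          + (if (NoDoubleAsc σ ∧ Asc σ 0 ∧ Desc σ m
              ∧ ((σ ⟨0, Nat.succ_pos _⟩ : Fin (m+2)) : ℕ) = j) then 2 ^ dd σ else 0))
        else 0 := by
    intro σ
    by_cases h1 : ((σ ⟨0, Nat.succ_pos _⟩ : Fin (m+2)) : ℕ) = j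
    · by_cases h2 : j < k
      · by_cases h3 : NoDoubleAsc σ ∧ Desc σ m
        · rw [if_pos h1, if_pos ⟨by omega, h3⟩, if_pos h2]
          by_cases hd : Desc σ 0
          · rw [if_pos hd, if_pos ⟨h3.1, hd, h3.2, h1⟩,
              if_neg (fun hh => ((not_asc_iff_desc σ 0 h02).2 hd) hh.2.1), add_zero]
          · rw [if_neg hd, if_neg (fun hh => hd hh.2.1),
              if_pos ⟨h3.1, asc_or_desc σ 0 h02 hd, h3.2, h1⟩, zero_add]
        · rw [if_pos h1, if_neg (fun hh => h3 hh.2), if_pos h2,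
            if_neg (fun hh => h3 ⟨hh.1, hh.2.2.1⟩),
            if_neg (fun hh => h3 ⟨hh.1, hh.2.2.1⟩), add_zero]
      · rw [if_pos h1, if_neg (fun hh => h2 (by omega)), if_neg h2]
    · rw [if_neg h1]
      by_cases h2 : j < k
      · rw [if_pos h2, if_neg (fun hh => h1 hh.2.2.2), if_neg (fun hh => h1 hh.2.2.2), add_zero]
      · rw [if_neg h2]
  rw [Finset.sum_congr rfl (fun σ _ => hpt2 σ), sum_ite_pull]
  refine if_congr Iff.rfl ?_ rfl
  rw [Finset.sum_add_distrib]
  congr 1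
  · have hpull : ∀ σ : Perm (Fin (m+2)),
        (if (NoDoubleAsc σ ∧ Desc σ 0 ∧ Desc σ m
            ∧ ((σ ⟨0, Nat.succ_pos _⟩ : Fin (m+2)) : ℕ) = j) then 2 * 2 ^ dd σ else 0)
        = 2 * (if (NoDoubleAsc σ ∧ Desc σ 0 ∧ Desc σ m
            ∧ ((σ ⟨0, Nat.succ_pos _⟩ : Fin (m+2)) : ℕ) = j) then 2 ^ dd σ else 0) := by
      intro σ
      by_cases hc : (NoDoubleAsc σ ∧ Desc σ 0 ∧ Desc σ m
            ∧ ((σ ⟨0, Nat.succ_pos _⟩ : Fin (m+2)) : ℕ) = j)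
      · rw [if_pos hc, if_pos hc]
      · rw [if_neg hc, if_neg hc, mul_zero]
    rw [Finset.sum_congr rfl (fun σ _ => hpull σ), ← Finset.mul_sum]
    rw [Finset.sum_filter]
  · unfold GGp
    rw [Finset.sum_filter]

/-! ### master induction -/

lemma sum_TT (m k : ℕ) :
    ∑ j ∈ range k, (j * TT m (j-1) + TT (m+1) j) = k * TT (m+1) (k-1) := by
  induction k with
  | zero => simp
  | succ k ih =>
    rw [Finset.sum_range_succ, ih]
    cases k with
    | zero => simp
    | succ l =>
      simp only [Nat.succ_sub_one]
      have hp : TT (m+1) (l+1) = TT (m+1) l + TT m l := TT_pascal m l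
      rw [hp]
      ring

lemma sum_TT2 (m : ℕ) : ∀ d k, k + d = m + 2 →
    k * TT (m+1) (k-1) + (∑ j ∈ Ico k (m+2), j * TT m (j-1)) = TT (m+2) k := by
  intro d
  induction d with
  | zero =>
    intro k hk
    have hkm : k = m + 2 := by omega
    subst hkm
    rw [Finset.Ico_self, Finset.sum_empty, add_zero]
    have h1 : (m+2) - 1 = m + 1 := rfl
    rw [h1, TT_self, TT_self]
    have : (m+2).factorial = (m+2) * (m+1).factorial := rfl
    rw [this]
  | succ d ihd =>
    intro k hk
    have hklt : k < m + 2 := by omega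
    have ih := ihd (k+1) (by omega)
    rw [Finset.sum_eq_sum_Ico_succ_bot hklt]
    have hp2 : TT (m+2) (k+1) = TT (m+2) k + TT (m+1) k := TT_pascal (m+1) k
    cases k with
    | zero =>
      norm_num at ih hp2 ⊢
      omega
    | succ l =>
      simp only [Nat.succ_sub_one] at ih ⊢
      have hp1 : TT (m+1) (l+1) = TT (m+1) l + TT m l := TT_pascal m l
      apply Nat.add_right_cancel (m := TT (m+1) (l+1))
      calc (l+1) * TT (m+1) l + ((l+1) * TT m l + ∑ j ∈ Ico (l+2) (m+2), j * TT m (j-1))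
            + TT (m+1) (l+1)
          = (l+1+1) * TT (m+1) (l+1) + ∑ j ∈ Ico (l+1+1) (m+2), j * TT m (j-1) := by
            rw [hp1]; ring
        _ = TT (m+2) (l+1+1) := ih
        _ = TT (m+2) (l+1) + TT (m+1) (l+1) := hp2

lemma master (m : ℕ) : ∀ k, k < m + 2 →
    FFp m k = k * TT m (k-1) ∧ FFp m k + GGp m k = TT (m+1) k := by
  induction m with
  | zero =>
    intro k hk
    interval_cases k
    · constructor
      · rw [FFp_zero]; norm_num
      · rw [FFp_zero, GGp_zero]
        norm_num [TT, numDerangements]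
    · constructor
      · rw [FFp_zero]
        norm_num [TT, numDerangements]
      · rw [FFp_zero, GGp_zero]
        norm_num [TT, Finset.sum_range_succ, numDerangements]
  | succ m ihm =>
    intro k hk
    have ha : FFp (m+1) k = k * TT (m+1) (k-1) := by
      rw [FFp_rec m k (by omega)]
      have hr : ∀ j ∈ range (m+2), (if j < k then 2 * FFp m j + GGp m j else 0)
          = (if j < k then (j * TT m (j-1) + TT (m+1) j) else 0) := by
        intro j hj
        refine if_congr Iff.rfl ?_ rfl
        have h1 := ihm j (Finset.mem_range.1 hj)
        calc 2 * FFp m j + GGp m j = FFp m j + (FFp m j + GGp m j) := by ring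
          _ = FFp m j + TT (m+1) j := by rw [h1.2]
          _ = j * TT m (j-1) + TT (m+1) j := by rw [h1.1]
      rw [Finset.sum_congr rfl hr]
      have hflt : (range (m+2)).filter (fun j => j < k) = range k := by
        ext x
        simp only [Finset.mem_filter, Finset.mem_range]
        omega
      rw [← Finset.sum_filter, hflt, sum_TT]
    refine ⟨ha, ?_⟩
    rw [ha, GGp_rec m k]
    have hfe : (range (m+2)).filter (fun j => k ≤ j) = Ico k (m+2) := by
      ext x
      simp only [Finset.mem_filter, Finset.mem_range, Finset.mem_Ico]
      omega
    have hsum2 : ∑ j ∈ range (m+2), (if k ≤ j then FFp m j else 0)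
        = ∑ j ∈ Ico k (m+2), j * TT m (j-1) := by
      rw [← Finset.sum_filter, hfe]
      apply Finset.sum_congr rfl
      intro j hj
      exact (ihm j (Finset.mem_Ico.1 hj).2).1
    rw [hsum2]
    exact sum_TT2 m (m+2-k) k (by omega)

/-! ### assembling part A -/

lemma alpha_decomp (m : ℕ) : alphaAB (m+2) = ∑ k ∈ range (m+2), GGp m k := by
  unfold alphaAB GGp
  simp only [Nat.add_sub_cancel]
  rw [Finset.sum_filter]
  rw [sum_fiber_first (f := fun π : Perm (Fin (m+2)) =>
      if (NoDoubleAsc π ∧ Asc π 0 ∧ Desc π m) then (2:ℕ) ^ dd π else 0)]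
  apply Finset.sum_congr rfl
  intro k hk
  rw [Finset.sum_filter]
  apply Finset.sum_congr rfl
  intro σ _
  by_cases h1 : ((σ ⟨0, Nat.succ_pos _⟩ : Fin (m+2)) : ℕ) = k
  · rw [if_pos h1]
    by_cases h2 : NoDoubleAsc σ ∧ Asc σ 0 ∧ Desc σ m
    · rw [if_pos h2, if_pos ⟨h2.1, h2.2.1, h2.2.2, h1⟩]
    · rw [if_neg h2, if_neg (fun hh => h2 ⟨hh.1, hh.2.1, hh.2.2.1⟩)]
  · rw [if_neg h1, if_neg (fun hh => h1 hh.2.2.2)]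

lemma partA (m : ℕ) :
    (alphaAB (m+2) : ℤ) = (m+2).factorial - 2 * numDerangements (m+2) := by
  have hsum : (alphaAB (m+2) : ℤ) = ∑ k ∈ range (m+2), (GGp m k : ℤ) := by
    rw [alpha_decomp m]
    push_cast
    try rfl
  have hGT : ∀ k ∈ range (m+2), (GGp m k : ℤ)
      = (TT (m+1) k : ℤ) - ((k : ℤ) * TT m (k-1)) := by
    intro k hk
    have h := master m k (Finset.mem_range.1 hk)
    have e1 : (FFp m k : ℤ) = (k : ℤ) * TT m (k-1) := by exact_mod_cast h.1
    have e2 : (FFp m k : ℤ) + GGp m k = TT (m+1) k := by exact_mod_cast h.2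
    linarith
  rw [hsum, Finset.sum_congr rfl hGT, Finset.sum_sub_distrib]
  have har := AR m
  linarith

/-! ### part B : the rounding -/

lemma round_half_lt (x : ℝ) (z : ℤ) (h : |x - z| < 1/2) : round x = z := by
  have h1 := abs_lt.1 h
  rw [round_eq, Int.floor_eq_iff]
  constructor
  · push_cast; linarith [h1.1]
  · push_cast; linarith [h1.2]

lemma derangements_div (n : ℕ) :
    (numDerangements n : ℝ) / n.factorial = ∑ k ∈ range (n+1), (-1:ℝ)^k / k.factorial := by
  rw [← Int.cast_natCast (numDerangements n), numDerangements_sum]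
  push_cast
  rw [Finset.sum_div]
  refine Finset.sum_congr rfl ?_
  intro k hk
  have h_le : k ≤ n := Finset.mem_range_succ_iff.mp hk
  rw [Nat.ascFactorial_eq_div, add_tsub_cancel_of_le h_le]
  push_cast [Nat.factorial_dvd_factorial h_le]
  field_simp [Nat.factorial_ne_zero]

lemma partB (n : ℕ) (hn : 3 ≤ n) :
    round ((1 - 2 / Real.exp 1) * (n.factorial : ℝ))
      = (n.factorial : ℤ) - 2 * numDerangements n := by
  apply round_half_lt
  have hFpos : (0:ℝ) < (n.factorial : ℝ) := by positivity
  have hD : (numDerangements n : ℝ)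
      = (n.factorial : ℝ) * ∑ k ∈ range (n+1), (-1:ℝ)^k / k.factorial := by
    rw [← derangements_div n]
    field_simp
  have hexp : Real.exp (-1) = (Real.exp 1)⁻¹ := by
    rw [Real.exp_neg]
  set s : ℝ := ∑ k ∈ range (n+1), (-1:ℝ)^k / k.factorial with hs
  have hkey : (1 - 2 / Real.exp 1) * (n.factorial : ℝ)
        - (((n.factorial : ℤ) - 2 * numDerangements n : ℤ) : ℝ)
      = 2 * (n.factorial : ℝ) * (s - Real.exp (-1)) := by
    push_cast
    rw [hD, hexp]
    have he : Real.exp 1 ≠ 0 := (Real.exp_pos 1).ne'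
    field_simp
    ring
  rw [hkey]
  have hbound : |s - Real.exp (-1)| ≤ ((n:ℝ)+1+1) / (((n+1).factorial : ℝ) * ((n:ℝ)+1)) := by
    have hb := Real.exp_bound (x := (-1:ℝ)) (by norm_num) (n := n+1) (by omega)
    have h1 : |(-1:ℝ)| ^ (n+1) = 1 := by
      rw [abs_neg, abs_one, one_pow]
    rw [h1, one_mul] at hb
    rw [abs_sub_comm]
    push_cast at hb
    exact hb
  rw [abs_mul, abs_of_pos (by positivity : (0:ℝ) < 2 * (n.factorial : ℝ))]
  rcases Nat.lt_or_ge n 4 with h4 | h4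
  · -- n = 3
    have hn3 : n = 3 := by omega
    subst hn3
    have hD3 : numDerangements 3 = 2 := by decide
    have hF3 : (Nat.factorial 3 : ℝ) = 6 := by norm_num [Nat.factorial]
    have hsval : s = 1/3 := by
      rw [hs]
      rw [Finset.sum_range_succ, Finset.sum_range_succ, Finset.sum_range_succ,
        Finset.sum_range_succ, Finset.sum_range_zero]
      norm_num [Nat.factorial]
    have hgt := Real.exp_one_gt_d9
    have hlt := Real.exp_one_lt_d9
    have hepos := Real.exp_pos (1:ℝ)
    have h24 : Real.exp 1 * (Real.exp 1)⁻¹ = 1 := mul_inv_cancel₀ hepos.ne'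
    rw [hF3, hsval, hexp]
    have habs : |1/3 - (Real.exp 1)⁻¹| < 1/24 := by
      rw [abs_sub_lt_iff]
      constructor
      · nlinarith [h24, hlt, hepos, inv_pos.2 hepos]
      · nlinarith [h24, hgt, hepos, inv_pos.2 hepos]
    nlinarith [habs, abs_nonneg (1/3 - (Real.exp 1)⁻¹)]
  · -- n ≥ 4
    calc 2 * (n.factorial : ℝ) * |s - Real.exp (-1)|
        ≤ 2 * (n.factorial : ℝ) * (((n:ℝ)+1+1) / (((n+1).factorial : ℝ) * ((n:ℝ)+1))) := by
          apply mul_le_mul_of_nonneg_left hbound (by positivity)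
      _ = 2 * ((n:ℝ)+2) / (((n:ℝ)+1)*((n:ℝ)+1)) := by
          have hfs : ((n+1).factorial : ℝ) = ((n:ℝ)+1) * (n.factorial : ℝ) := by
            rw [Nat.factorial_succ]; push_cast; ring
          rw [hfs]
          field_simp
          ring
      _ < 1/2 := by
          rw [div_lt_iff₀ (by positivity)]
          have hn4 : (4:ℝ) ≤ (n:ℝ) := by exact_mod_cast h4
          nlinarith

end AlphaProof

/-- For n ≥ 3, α_n(a,b) is the nearest integer to (1 − 2/e) · n!. -/
theorem alphaAB_eq_nearest (n : ℕ) (hn : 3 ≤ n) :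
    (alphaAB n : ℤ) = round ((1 - 2 / Real.exp 1) * n.factorial) := by
  obtain ⟨m, rfl⟩ : ∃ m, n = m + 2 := ⟨n - 2, by omega⟩
  rw [AlphaProof.partB (m+2) hn]
  exact AlphaProof.partA m
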